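/- Let C = C_Δ ⊕ ℝ^{n−m} ⊂ ℝ^n, where C_Δ is an m-dimensional simplicial cone, let E_1, …, E_m be the facets of C, and let 𝐏 ⊂ C be a finite lattice set with P = Conv(𝐏) such that each D_i is nonempty. Then: (1) each off-coordinate polytope D_i is a daughter polytope of 𝐏, with 𝒟(D_i) equal to {P ∩ E_i} if P ∩ E_i ≠ ∅ and empty otherwise; (2) for every face F of P, the number of off-coordinate polytopes intersecting F equals the dimension of the minimal face of C containing F; (3) the off-coordinate polytopes D_1, …, D_n are semi-interlaced in 𝐏, and the sutures are exactly the V-faces of P. -/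

import Mathlib

open Pointwise Filter
open scoped Classical

noncomputable section

def intLattice (n : ℕ) : AddSubgroup (Fin n → ℝ) where
  carrier := {x | ∀ i, ∃ m : ℤ, x i = (m : ℝ)}
  zero_mem' := fun i => ⟨0, by simp⟩
  add_mem' := by
    intro a b ha hb i
    obtain ⟨p, hp⟩ := ha i
    obtain ⟨q, hq⟩ := hb i
    exact ⟨p + q, by simp [hp, hq]⟩
  neg_mem' := by
    intro a ha i
    obtain ⟨p, hp⟩ := ha i
    exact ⟨-p, by simp [hp]⟩

/-- Lattice volume (normalized so that a unit simplex of the lattice `L` has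
volume `1`) of a `k`-dimensional set `Q`, defined via asymptotic counting of
lattice points in dilations of `Q`. -/
def latVol {E : Type*} [AddCommGroup E] [Module ℝ E] (L : AddSubgroup E)
    (k : ℕ) (Q : Set E) : ℝ :=
  Filter.limsup
    (fun t : ℕ => (Nat.factorial k : ℝ) *
      (Nat.card ↥(((t : ℝ) • Q) ∩ (L : Set E))) / (t : ℝ) ^ k) Filter.atTop

/-- Mixed volume of the polytopes `Q i`, `i ∈ T`, via inclusion-exclusion of
lattice volumes of Minkowski sums. -/
def mixedVol {E : Type*} [AddCommGroup E] [Module ℝ E] {ι : Type*}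
    (L : AddSubgroup E) (T : Finset ι) (Q : ι → Set E) : ℝ :=
  ∑ I ∈ T.powerset,
    if I.Nonempty then
      (-1 : ℝ) ^ (T.card - I.card) * latVol L T.card (∑ i ∈ I, Q i)
    else 0

/-- `F` is a face of `P`: the set of maximizers over `P` of some linear functional. -/
def IsFaceOf {E : Type*} [AddCommGroup E] [Module ℝ E] (P F : Set E) : Prop :=
  ∃ ξ : E →ₗ[ℝ] ℝ, F = {x ∈ P | ∀ y ∈ P, ξ y ≤ ξ x}

/-- Dimension of (the affine span of) a set. -/
def sdim {E : Type*} [AddCommGroup E] [Module ℝ E] (Q : Set E) : ℕ :=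
  Module.finrank ℝ (vectorSpan ℝ Q)

/-- The family D-family: faces of `P` maximal among the faces disjoint from `D`. -/
def DFam {E : Type*} [AddCommGroup E] [Module ℝ E] (P D : Set E) : Set (Set E) :=
  {F | Maximal (fun G => IsFaceOf P G ∧ G ∩ D = ∅) F}

/-- `D` is a daughter polytope of the finite set `A`. -/
def IsDaughter {E : Type*} [AddCommGroup E] [Module ℝ E] (A : Finset E) (D : Set E) : Prop :=
  D.Nonempty ∧
  (∀ F ∈ DFam (convexHull ℝ (A : Set E)) D, ∀ F' ∈ DFam (convexHull ℝ (A : Set E)) D,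
    F ≠ F' → F ∩ F' = ∅) ∧
  D = convexHull ℝ ((A : Set E) \ ⋃ F ∈ DFam (convexHull ℝ (A : Set E)) D, F)

/-- The daughter polytopes `D i`, `i ∈ T`, are semi-interlaced in `A`. -/
def SemiInterlaced {E : Type*} [AddCommGroup E] [Module ℝ E] {ι : Type*}
    (A : Finset E) (T : Finset ι) (D : ι → Set E) : Prop :=
  (∀ i ∈ T, IsDaughter A (D i)) ∧
  ∀ F, IsFaceOf (convexHull ℝ (A : Set E)) F →
    sdim F ≤ (T.filter fun i => (D i ∩ F).Nonempty).card

/-- A face `F` of `Conv A` is a suture if exactly `dim F` of the `D i` meet it. -/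
def IsSuture {E : Type*} [AddCommGroup E] [Module ℝ E] {ι : Type*}
    (A : Finset E) (T : Finset ι) (D : ι → Set E) (F : Set E) : Prop :=
  IsFaceOf (convexHull ℝ (A : Set E)) F ∧
  (T.filter fun i => (D i ∩ F).Nonempty).card = sdim F



/-! ### Auxiliary lemmas -/

section FaceAux

variable {E : Type*} [AddCommGroup E] [Module ℝ E]

lemma conv_le_of_le {s : Set E} (ξ : E →ₗ[ℝ] ℝ) {r : ℝ} (h : ∀ a ∈ s, ξ a ≤ r) :
    ∀ x ∈ convexHull ℝ s, ξ x ≤ r := fun _ hx =>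
  convexHull_min h (convex_halfSpace_le ξ.isLinear r) hx

lemma conv_ge_of_ge {s : Set E} (ξ : E →ₗ[ℝ] ℝ) {r : ℝ} (h : ∀ a ∈ s, r ≤ ξ a) :
    ∀ x ∈ convexHull ℝ s, r ≤ ξ x := fun _ hx =>
  convexHull_min h (convex_halfSpace_ge ξ.isLinear r) hx

lemma conv_eq_of_eq {s : Set E} (ξ : E →ₗ[ℝ] ℝ) {r : ℝ} (h : ∀ a ∈ s, ξ a = r) :
    ∀ x ∈ convexHull ℝ s, ξ x = r := fun x hx =>
  le_antisymm (conv_le_of_le ξ (fun a ha => (h a ha).le) x hx)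
    (conv_ge_of_ge ξ (fun a ha => (h a ha).ge) x hx)

lemma face_subset {P F : Set E} (h : IsFaceOf P F) : F ⊆ P := by
  obtain ⟨ξ, rfl⟩ := h; exact fun x hx => hx.1

lemma face_rep {A : Finset E} (hA : A.Nonempty) {F : Set E}
    (hF : IsFaceOf (convexHull ℝ (A : Set E)) F) :
    ∃ B : Finset E, B ⊆ A ∧ B.Nonempty ∧ F = convexHull ℝ (B : Set E) := by
  classical
  obtain ⟨ξ, rfl⟩ := hF
  obtain ⟨a₀, ha₀A, hmax⟩ := A.exists_max_image ξ hA
  refine ⟨A.filter (fun a => ξ a₀ ≤ ξ a), Finset.filter_subset _ _,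
    ⟨a₀, Finset.mem_filter.2 ⟨ha₀A, le_refl _⟩⟩, ?_⟩
  set B := A.filter (fun a => ξ a₀ ≤ ξ a) with hB
  have hBA : B ⊆ A := Finset.filter_subset _ _
  have hboundA : ∀ x ∈ convexHull ℝ (A : Set E), ξ x ≤ ξ a₀ :=
    conv_le_of_le ξ (fun a ha => hmax a (by exact_mod_cast ha))
  ext x
  constructor
  · rintro ⟨hxP, hxmax⟩
    have hxa : ξ x = ξ a₀ := le_antisymm (hboundA x hxP)
      (hxmax a₀ (subset_convexHull ℝ _ ha₀A))
    rw [Finset.convexHull_eq] at hxP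
    obtain ⟨w, hw0, hw1, hwx⟩ := hxP
    rw [Finset.centerMass_eq_of_sum_1 _ id hw1] at hwx
    simp only [id] at hwx
    have e1 : ξ x = ∑ a ∈ A, w a * ξ a := by
      rw [← hwx, map_sum]
      exact Finset.sum_congr rfl (fun a _ => by rw [map_smul, smul_eq_mul])
    have hsum0 : ∑ a ∈ A, w a * (ξ a₀ - ξ a) = 0 := by
      have e2 : ∑ a ∈ A, w a * (ξ a₀ - ξ a)
          = (∑ a ∈ A, w a) * ξ a₀ - ∑ a ∈ A, w a * ξ a := by
        rw [Finset.sum_mul, ← Finset.sum_sub_distrib]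
        exact Finset.sum_congr rfl (fun a _ => by ring)
      rw [e2, hw1, one_mul, ← e1, hxa, sub_self]
    have hkey : ∀ a ∈ A, a ∉ B → w a = 0 := by
      intro a ha hnb
      have h1 := (Finset.sum_eq_zero_iff_of_nonneg
        (fun a ha => mul_nonneg (hw0 a ha) (sub_nonneg.2 (hmax a ha)))).1 hsum0 a ha
      have h2 : ξ a < ξ a₀ := by
        by_contra h
        exact hnb (Finset.mem_filter.2 ⟨ha, not_lt.1 h⟩)
      rcases mul_eq_zero.1 h1 with h | h
      · exact h
      · exact absurd h (by intro h'; linarith)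
    rw [Finset.convexHull_eq]
    refine ⟨w, fun y hy => hw0 y (hBA hy), ?_, ?_⟩
    · rw [Finset.sum_subset hBA (fun a ha hnb => hkey a ha hnb)]
      exact hw1
    · rw [Finset.centerMass_eq_of_sum_1 _ id
        (by rw [Finset.sum_subset hBA (fun a ha hnb => hkey a ha hnb)]; exact hw1)]
      simp only [id]
      rw [Finset.sum_subset hBA (fun a ha hnb => by rw [hkey a ha hnb, zero_smul])]
      exact hwx
  · intro hx
    have hxA : x ∈ convexHull ℝ (A : Set E) :=
      convexHull_mono (by exact_mod_cast hBA) hx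
    have hxge : ξ a₀ ≤ ξ x :=
      conv_ge_of_ge ξ (fun a ha => by
        have haB : a ∈ B := by exact_mod_cast ha
        exact (Finset.mem_filter.1 haB).2) x hx
    exact ⟨hxA, fun y hy => (hboundA y hy).trans hxge⟩

lemma face_nonempty {A : Finset E} (hA : A.Nonempty) {F : Set E}
    (hF : IsFaceOf (convexHull ℝ (A : Set E)) F) : F.Nonempty := by
  obtain ⟨B, hBA, ⟨b, hb⟩, rfl⟩ := face_rep hA hF
  exact ⟨b, subset_convexHull ℝ _ (by exact_mod_cast hb)⟩

end FaceAux

lemma card_lt_filter (n m : ℕ) (h : m ≤ n) :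
    (Finset.univ.filter (fun i : Fin n => (i : ℕ) < m)).card = m := by
  have he : (Finset.univ.filter (fun i : Fin n => (i : ℕ) < m))
      = Finset.map (Fin.castLEEmb h) Finset.univ := by
    ext i
    simp only [Finset.mem_filter, Finset.mem_univ, true_and, Finset.mem_map]
    constructor
    · intro hi
      exact ⟨⟨i, hi⟩, rfl⟩
    · rintro ⟨j, rfl⟩
      exact j.2
  rw [he, Finset.card_map, Finset.card_univ, Fintype.card_fin]

section ConeAux

variable {n m : ℕ} {v : Fin m → (Fin n → ℝ)} {W : Submodule ℝ (Fin n → ℝ)}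
  {C : Set (Fin n → ℝ)} {ξc : Fin m → ((Fin n → ℝ) →ₗ[ℝ] ℝ)}

lemma exists_dual (hv : LinearIndependent ℝ v)
    (hcompl : IsCompl (Submodule.span ℝ (Set.range v)) W) :
    ∃ ξc : Fin m → ((Fin n → ℝ) →ₗ[ℝ] ℝ),
      (∀ i j, ξc i (v j) = if j = i then 1 else 0) ∧
      (∀ x ∈ W, ∀ i, ξc i x = 0) := by
  refine ⟨fun i => ((Module.Basis.span hv).coord i).comp
    ((Submodule.span ℝ (Set.range v)).projectionOnto W hcompl), ?_, ?_⟩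
  · intro i j
    have hm : v j ∈ Submodule.span ℝ (Set.range v) :=
      Submodule.subset_span (Set.mem_range_self j)
    have h1 : ((Submodule.span ℝ (Set.range v)).projectionOnto W hcompl) (v j)
        = Module.Basis.span hv j := by
      have h2 := Submodule.projectionOnto_apply_left hcompl ⟨v j, hm⟩
      have h3 : (Module.Basis.span hv j : Fin n → ℝ) = v j := congrArg Subtype.val (Module.Basis.span_apply hv j)
      rw [show v j = ((⟨v j, hm⟩ : Submodule.span ℝ (Set.range v)) : Fin n → ℝ) from rfl, h2]
      exact Subtype.ext h3.symm
    rw [LinearMap.comp_apply, h1, Module.Basis.coord_apply, Module.Basis.repr_self]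
    exact Finsupp.single_apply
  · intro x hx i
    rw [LinearMap.comp_apply,
      show ((Submodule.span ℝ (Set.range v)).projectionOnto W hcompl) x = 0 from
        Submodule.projectionOnto_apply_right hcompl ⟨x, hx⟩,
      map_zero]

def coneFace (C : Set (Fin n → ℝ)) (ξc : Fin m → ((Fin n → ℝ) →ₗ[ℝ] ℝ))
    (T : Finset (Fin m)) : Set (Fin n → ℝ) :=
  {x ∈ C | ∀ i ∉ T, ξc i x = 0}

variable (hC : C = {x | ∃ (c : Fin m → ℝ) (w : Fin n → ℝ),
      (∀ i, 0 ≤ c i) ∧ w ∈ W ∧ x = (∑ i, c i • v i) + w})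
  (hξv : ∀ i j, ξc i (v j) = if j = i then 1 else 0)
  (hξW : ∀ x ∈ W, ∀ i, ξc i x = 0)

include hξv hξW in
lemma xi_rep {c : Fin m → ℝ} {w : Fin n → ℝ} (hw : w ∈ W) (j : Fin m) :
    ξc j ((∑ i, c i • v i) + w) = c j := by
  rw [map_add, hξW w hw j, add_zero, map_sum]
  have : ∀ i, ξc j (c i • v i) = if i = j then c i else 0 := by
    intro i
    rw [map_smul, hξv j i, smul_eq_mul]
    by_cases h : i = j <;> simp [h]
  simp only [this]
  simp

include hC in
lemma zero_mem_C : (0 : Fin n → ℝ) ∈ C := by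
  rw [hC]; exact ⟨0, 0, fun i => le_refl 0, W.zero_mem, by simp⟩

include hC hξv hξW in
lemma mem_C_iff (x : Fin n → ℝ) :
    x ∈ C ↔ (∀ i, 0 ≤ ξc i x) ∧ x - ∑ i, ξc i x • v i ∈ W := by
  constructor
  · intro hx
    rw [hC] at hx
    obtain ⟨c, w, hc, hw, rfl⟩ := hx
    have hrep : ∀ j, ξc j ((∑ i, c i • v i) + w) = c j := fun j => xi_rep hξv hξW hw j
    refine ⟨fun i => by rw [hrep]; exact hc i, ?_⟩
    have he : (∑ i, c i • v i) + w - ∑ i, ξc i ((∑ i, c i • v i) + w) • v i = w := by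
      have h4 : ∀ i, ξc i ((∑ i, c i • v i) + w) • v i = c i • v i := fun i => by rw [hrep]
      rw [Finset.sum_congr rfl (fun i _ => h4 i)]
      abel
    rw [he]; exact hw
  · rintro ⟨h0, hw⟩
    rw [hC]
    exact ⟨fun i => ξc i x, x - ∑ i, ξc i x • v i, h0, hw, by abel⟩

include hC in
lemma C_convex : Convex ℝ C := by
  rw [hC]
  rintro x ⟨c, w, hc, hw, rfl⟩ y ⟨c', w', hc', hw', rfl⟩ a b ha hb hab
  refine ⟨fun i => a * c i + b * c' i, a • w + b • w',
    fun i => by have := hc i; have := hc' i; positivity,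
    W.add_mem (W.smul_mem a hw) (W.smul_mem b hw'), ?_⟩
  have h1 : ∑ i, (a * c i + b * c' i) • v i
      = a • ∑ i, c i • v i + b • ∑ i, c' i • v i := by
    rw [Finset.smul_sum, Finset.smul_sum, ← Finset.sum_add_distrib]
    exact Finset.sum_congr rfl (fun i _ => by rw [add_smul, smul_smul, smul_smul])
  rw [h1, smul_add, smul_add]
  abel

include hC in
lemma C_add_W {x w : Fin n → ℝ} (hx : x ∈ C) (hw : w ∈ W) : x + w ∈ C := by
  rw [hC] at hx ⊢
  obtain ⟨c, w₀, hc, hw₀, rfl⟩ := hx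
  exact ⟨c, w₀ + w, hc, W.add_mem hw₀ hw, by abel⟩

include hC in
lemma W_subset_C {w : Fin n → ℝ} (hw : w ∈ W) : w ∈ C := by
  rw [hC]; exact ⟨0, w, fun i => le_refl 0, hw, by simp⟩

include hC in
lemma v_mem_C (j : Fin m) : v j ∈ C := by
  rw [hC]
  refine ⟨fun i => if i = j then 1 else 0, 0, fun i => by positivity, W.zero_mem, ?_⟩
  have : ∀ i, (if i = j then (1:ℝ) else 0) • v i = if i = j then v i else 0 := by
    intro i; by_cases h : i = j <;> simp [h]
  simp only [this]
  simp

include hC in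
lemma C_add_ray {x : Fin n → ℝ} (hx : x ∈ C) {t : ℝ} (ht : 0 ≤ t) (j : Fin m) :
    x + t • v j ∈ C := by
  rw [hC] at hx ⊢
  obtain ⟨c, w, hc, hw, rfl⟩ := hx
  refine ⟨fun i => c i + t * (if i = j then 1 else 0), w, fun i => ?_, hw, ?_⟩
  · by_cases h : i = j
    · subst h
      simp only [if_true, eq_self_iff_true, mul_one]
      have := hc i
      simp
      linarith [hc i, ht]
    · simp only [if_neg h, mul_zero, add_zero]
      exact hc i
  · have h1 : ∑ i, (c i + t * (if i = j then 1 else 0)) • v i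
        = (∑ i, c i • v i) + t • v j := by
      have h2 : ∀ i, (c i + t * (if i = j then 1 else 0)) • v i
          = c i • v i + (if i = j then t • v i else 0) := by
        intro i; by_cases h : i = j <;> simp [h, add_smul]
      rw [Finset.sum_congr rfl (fun i _ => h2 i), Finset.sum_add_distrib]
      simp
    rw [h1]; abel

include hC hξv hξW in
lemma xi_nonneg_onC {x : Fin n → ℝ} (hx : x ∈ C) (i : Fin m) : 0 ≤ ξc i x :=
  ((mem_C_iff hC hξv hξW x).1 hx).1 i

include hC hξv hξW in
lemma x_decomp {x : Fin n → ℝ} (hx : x ∈ C) {η : (Fin n → ℝ) →ₗ[ℝ] ℝ}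
    (hηW : ∀ w ∈ W, η w = 0) : η x = ∑ j, ξc j x * η (v j) := by
  obtain ⟨h0, hwmem⟩ := (mem_C_iff hC hξv hξW x).1 hx
  have hxe : x = (∑ j, ξc j x • v j) + (x - ∑ j, ξc j x • v j) := by abel
  conv_lhs => rw [hxe]
  rw [map_add, hηW _ hwmem, add_zero, map_sum]
  exact Finset.sum_congr rfl (fun j _ => by rw [map_smul, smul_eq_mul])

include hC hξv hξW in
lemma mem_Efac_iff {Efac : Set (Fin n → ℝ)} {i₀ : Fin m}
    (hE : Efac = {x | ∃ (c : Fin m → ℝ) (w : Fin n → ℝ),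
      (∀ i, 0 ≤ c i) ∧ c i₀ = 0 ∧ w ∈ W ∧ x = (∑ i, c i • v i) + w})
    {x : Fin n → ℝ} (hx : x ∈ C) : x ∈ Efac ↔ ξc i₀ x = 0 := by
  constructor
  · intro hxE
    rw [hE] at hxE
    obtain ⟨c, w, hc, hc0, hw, rfl⟩ := hxE
    rw [xi_rep hξv hξW hw i₀]; exact hc0
  · intro h0
    obtain ⟨hnn, hwmem⟩ := (mem_C_iff hC hξv hξW x).1 hx
    rw [hE]
    exact ⟨fun i => ξc i x, x - ∑ i, ξc i x • v i, hnn, h0, hwmem, by abel⟩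

include hC hξv hξW in
lemma CF_isFace (T : Finset (Fin m)) : IsFaceOf C (coneFace C ξc T) := by
  classical
  refine ⟨- (∑ i ∈ Tᶜ, ξc i), ?_⟩
  have hval : ∀ x, (- (∑ i ∈ Tᶜ, ξc i)) x = - ∑ i ∈ Tᶜ, ξc i x := by
    intro x; simp [LinearMap.sum_apply]
  have hle : ∀ y ∈ C, (- (∑ i ∈ Tᶜ, ξc i)) y ≤ 0 := by
    intro y hy
    rw [hval]
    simp only [neg_nonpos]
    exact Finset.sum_nonneg (fun i _ => xi_nonneg_onC hC hξv hξW hy i)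
  ext x
  simp only [coneFace, Set.mem_setOf_eq]
  constructor
  · rintro ⟨hxC, hz⟩
    have hx0 : (- (∑ i ∈ Tᶜ, ξc i)) x = 0 := by
      rw [hval, neg_eq_zero]
      exact Finset.sum_eq_zero (fun i hi => hz i (Finset.mem_compl.1 hi))
    exact ⟨hxC, fun y hy => by rw [hx0]; exact hle y hy⟩
  · rintro ⟨hxC, hxmax⟩
    refine ⟨hxC, ?_⟩
    have h1 : 0 ≤ (- (∑ i ∈ Tᶜ, ξc i)) x := by
      have := hxmax 0 (zero_mem_C hC)
      rwa [map_zero] at this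
    have h2 := hle x hxC
    have h3 : ∑ i ∈ Tᶜ, ξc i x = 0 := by
      rw [hval] at h1 h2; linarith
    intro i hi
    exact (Finset.sum_eq_zero_iff_of_nonneg
      (fun i _ => xi_nonneg_onC hC hξv hξW hxC i)).1 h3 i (Finset.mem_compl.2 hi)

include hC hξv hξW in
lemma face_structure {Q : Set (Fin n → ℝ)} (hQ : IsFaceOf C Q) (hQne : Q.Nonempty) :
    ∃ T : Finset (Fin m), Q = coneFace C ξc T := by
  classical
  obtain ⟨η, rfl⟩ := hQ
  obtain ⟨x₀, hx₀C, hx₀max⟩ := hQne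
  have hηW : ∀ w ∈ W, η w = 0 := by
    intro w hw
    by_contra hnz
    have h1 : x₀ + (η w) • w ∈ C := C_add_W hC hx₀C (W.smul_mem _ hw)
    have h2 := hx₀max _ h1
    rw [map_add, map_smul, smul_eq_mul] at h2
    nlinarith [mul_self_pos.2 hnz]
  have hηv : ∀ j, η (v j) ≤ 0 := by
    intro j
    by_contra h
    push_neg at h
    have h1 : x₀ + (1:ℝ) • v j ∈ C := C_add_ray hC hx₀C zero_le_one j
    have h2 := hx₀max _ h1
    rw [map_add, map_smul, smul_eq_mul, one_mul] at h2
    linarith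
  have hηC : ∀ y ∈ C, η y ≤ 0 := by
    intro y hy
    rw [x_decomp hC hξv hξW hy hηW]
    exact Finset.sum_nonpos (fun i _ =>
      mul_nonpos_of_nonneg_of_nonpos (xi_nonneg_onC hC hξv hξW hy i) (hηv i))
  refine ⟨Finset.univ.filter (fun i => η (v i) = 0), ?_⟩
  have hzero_le : ∀ x ∈ C, (∀ y ∈ C, η y ≤ η x) → η x = 0 := by
    intro x hx hmax
    refine le_antisymm (hηC x hx) ?_
    have := hmax 0 (zero_mem_C hC)
    rwa [map_zero] at this
  ext x
  simp only [coneFace, Set.mem_setOf_eq]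
  constructor
  · rintro ⟨hxC, hxmax⟩
    refine ⟨hxC, ?_⟩
    intro i hi
    have hx0 : η x = 0 := hzero_le x hxC hxmax
    have hsum0 : ∑ j, ξc j x * η (v j) = 0 := by
      rw [← x_decomp hC hξv hξW hxC hηW, hx0]
    have hterm := (Finset.sum_eq_zero_iff_of_nonpos (fun j _ =>
      mul_nonpos_of_nonneg_of_nonpos (xi_nonneg_onC hC hξv hξW hxC j) (hηv j))).1
      hsum0 i (Finset.mem_univ i)
    have hnz : η (v i) ≠ 0 := fun h =>
      hi (Finset.mem_filter.2 ⟨Finset.mem_univ _, h⟩)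
    rcases mul_eq_zero.1 hterm with h | h
    · exact h
    · exact absurd h hnz
  · rintro ⟨hxC, hz⟩
    refine ⟨hxC, ?_⟩
    have hx0 : η x = 0 := by
      rw [x_decomp hC hξv hξW hxC hηW]
      refine Finset.sum_eq_zero (fun j _ => ?_)
      by_cases hj : j ∈ Finset.univ.filter (fun i => η (v i) = 0)
      · rw [(Finset.mem_filter.1 hj).2, mul_zero]
      · rw [hz j hj, zero_mul]
    intro y hy
    rw [hx0]
    exact hηC y hy

lemma CF_mono {T T' : Finset (Fin m)} (h : T ⊆ T') :
    coneFace C ξc T ⊆ coneFace C ξc T' := by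
  rintro x ⟨hxC, hz⟩
  exact ⟨hxC, fun i hi => hz i (fun hmem => hi (h hmem))⟩

include hC hξv hξW in
lemma sdim_CF (hmn : m ≤ n) (hv : LinearIndependent ℝ v)
    (hcompl : IsCompl (Submodule.span ℝ (Set.range v)) W) (T : Finset (Fin m)) :
    sdim (coneFace C ξc T) = T.card + (n - m) := by
  classical
  set s := coneFace C ξc T with hs
  have h0s : (0 : Fin n → ℝ) ∈ s := ⟨zero_mem_C hC, fun i _ => map_zero _⟩
  have hvs : vectorSpan ℝ s = Submodule.span ℝ s := by
    apply le_antisymm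
    · rw [vectorSpan_def]
      apply Submodule.span_le.2
      rintro z hz
      rw [Set.mem_vsub] at hz
      obtain ⟨a, ha, b, hb, rfl⟩ := hz
      exact sub_mem (Submodule.subset_span ha) (Submodule.subset_span hb)
    · apply Submodule.span_le.2
      intro x hx
      rw [vectorSpan_def]
      have hmem : x -ᵥ (0 : Fin n → ℝ) ∈ s -ᵥ s := Set.vsub_mem_vsub hx h0s
      have h5 : x -ᵥ (0 : Fin n → ℝ) ∈ Submodule.span ℝ (s -ᵥ s) :=
        Submodule.subset_span hmem
      simpa using h5
  have hspan : Submodule.span ℝ s = Submodule.span ℝ (v '' ↑T) ⊔ W := by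
    apply le_antisymm
    · apply Submodule.span_le.2
      rintro x ⟨hxC, hz⟩
      obtain ⟨h0, hwmem⟩ := (mem_C_iff hC hξv hξW x).1 hxC
      have h1 : (∑ j, ξc j x • v j) ∈ Submodule.span ℝ (v '' ↑T) := by
        rw [show (∑ j, ξc j x • v j) = ∑ j ∈ T, ξc j x • v j from
          (Finset.sum_subset (Finset.subset_univ T)
            (fun j _ hj => by rw [hz j hj, zero_smul])).symm]
        exact Submodule.sum_mem _ (fun j hj =>
          Submodule.smul_mem _ _ (Submodule.subset_span ⟨j, hj, rfl⟩))
      have hxe : x = (∑ j, ξc j x • v j) + (x - ∑ j, ξc j x • v j) := by abel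
      rw [hxe]
      exact Submodule.add_mem _ (Submodule.mem_sup_left h1) (Submodule.mem_sup_right hwmem)
    · apply sup_le
      · apply Submodule.span_le.2
        rintro y ⟨j, hjT, rfl⟩
        apply Submodule.subset_span
        refine ⟨v_mem_C hC j, fun i hi => ?_⟩
        rw [hξv i j, if_neg]
        intro h
        exact hi (h ▸ hjT)
      · intro w hw
        apply Submodule.subset_span
        exact ⟨W_subset_C hC hw, fun i _ => hξW w hw i⟩
  rw [sdim, hvs, hspan]
  have hdisj : Submodule.span ℝ (v '' ↑T) ⊓ W = ⊥ := by
    apply disjoint_iff.1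
    exact hcompl.disjoint.mono_left (Submodule.span_mono
      (by rintro y ⟨j, _, rfl⟩; exact Set.mem_range_self j))
  have hfr := Submodule.finrank_sup_add_finrank_inf_eq (Submodule.span ℝ (v '' ↑T)) W
  rw [hdisj, finrank_bot] at hfr
  have hT : Module.finrank ℝ (Submodule.span ℝ (v '' ↑T)) = T.card := by
    have himg : v '' ↑T = Set.range (fun x : {a // a ∈ T} => v x) := by
      rw [Set.image_eq_range]
      rfl
    have hli : LinearIndependent ℝ (fun x : {a // a ∈ T} => v x) :=
      hv.comp _ Subtype.val_injective
    rw [himg, finrank_span_eq_card hli, Fintype.card_coe]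
  have hW : Module.finrank ℝ W = n - m := by
    have h1 := Submodule.finrank_add_eq_of_isCompl hcompl
    have h2 : Module.finrank ℝ (Submodule.span ℝ (Set.range v)) = m := by
      rw [finrank_span_eq_card hv, Fintype.card_fin]
    rw [h2, Module.finrank_fintype_fun_eq_card, Fintype.card_fin] at h1
    omega
  omega

end ConeAux

/-- **Off-coordinate polytopes are semi-interlaced (Remark on off-coordinate
polytopes).** Let `C = C_Δ ⊕ ℝ^{n−m}` where `C_Δ` is an `m`-dimensional
simplicial cone (spanned by the linearly independent rays `v` with lineality
space `W`), with facets `Efac i`, and let `A ⊆ C` be a finite lattice set with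
`P = Conv A` and nonempty off-coordinate polytopes
`D i = Conv (A ∖ Efac i)` for `i < m`, `D i = Conv A` for `i ≥ m`. Then:
(1) each `D i` is a daughter polytope of `A` whose family `𝒟(D i)` is
`{P ∩ Efac i}` if `i < m` and this set is nonempty, and `∅` otherwise;
(2) for every face `F` of `P` the number of `D i` meeting `F` equals the
dimension of the minimal face of `C` containing `F`;
(3) the `D i` are semi-interlaced in `A` and the sutures are exactly the
V-faces of `P`. -/
theorem off_coordinate_semi_interlaced (n m : ℕ) (hmn : m ≤ n)
    (v : Fin m → (Fin n → ℝ)) (hv : LinearIndependent ℝ v)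
    (W : Submodule ℝ (Fin n → ℝ))
    (hcompl : IsCompl (Submodule.span ℝ (Set.range v)) W)
    (C : Set (Fin n → ℝ))
    (hC : C = {x | ∃ (c : Fin m → ℝ) (w : Fin n → ℝ),
      (∀ i, 0 ≤ c i) ∧ w ∈ W ∧ x = (∑ i, c i • v i) + w})
    (Efac : Fin m → Set (Fin n → ℝ))
    (hE : ∀ i₀, Efac i₀ = {x | ∃ (c : Fin m → ℝ) (w : Fin n → ℝ),
      (∀ i, 0 ≤ c i) ∧ c i₀ = 0 ∧ w ∈ W ∧ x = (∑ i, c i • v i) + w})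
    (A : Finset (Fin n → ℝ)) (hlat : ∀ p ∈ A, p ∈ intLattice n)
    (hAC : (A : Set (Fin n → ℝ)) ⊆ C)
    (P : Set (Fin n → ℝ)) (hP : P = convexHull ℝ (A : Set (Fin n → ℝ)))
    (D : Fin n → Set (Fin n → ℝ))
    (hD : ∀ i : Fin n, D i = if h : (i : ℕ) < m then
      convexHull ℝ ((A : Set (Fin n → ℝ)) \ Efac ⟨(i : ℕ), h⟩)
      else convexHull ℝ (A : Set (Fin n → ℝ)))
    (hne : ∀ i, (D i).Nonempty) :
    (∀ i, IsDaughter A (D i) ∧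
      DFam P (D i) =
        {G | ∃ h : (i : ℕ) < m, G = P ∩ Efac ⟨(i : ℕ), h⟩ ∧ G.Nonempty}) ∧
    (∀ F, IsFaceOf P F → ∀ Q, Minimal (fun Q' => IsFaceOf C Q' ∧ F ⊆ Q') Q →
      (Finset.univ.filter fun i => (D i ∩ F).Nonempty).card = sdim Q) ∧
    (SemiInterlaced A Finset.univ D ∧
      ∀ F, IsFaceOf P F →
        (IsSuture A Finset.univ D F ↔
          ∃ Q, IsFaceOf C Q ∧ F ⊆ Q ∧ sdim F = sdim Q)) := by
  classical
  subst hP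
  by_cases hAne : A.Nonempty
  swap
  · -- degenerate case: `A = ∅`, which forces `n = 0`
    rw [Finset.not_nonempty_iff_eq_empty] at hAne
    subst hAne
    have hn0 : n = 0 := by
      by_contra h
      have i : Fin n := ⟨0, Nat.pos_of_ne_zero h⟩
      have hno := hne i
      rw [hD i] at hno
      revert hno
      split_ifs <;> simp
    subst hn0
    haveI hsub0 : Subsingleton (Fin 0 → ℝ) := ⟨fun f g => funext (fun i => i.elim0)⟩
    have hsdim0 : ∀ S : Set (Fin 0 → ℝ), sdim S = 0 := fun S =>
      Module.finrank_zero_of_subsingleton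
    have hCface : IsFaceOf C C := by
      refine ⟨0, ?_⟩
      ext x
      simp
    refine ⟨fun i => i.elim0, ?_, ?_, ?_⟩
    · intro F hF Q hQ
      rw [hsdim0]
      simp
    · exact ⟨fun i _ => i.elim0, fun F hF => by rw [hsdim0]; exact Nat.zero_le _⟩
    · intro F hF
      constructor
      · intro _
        refine ⟨C, hCface, ?_, by rw [hsdim0, hsdim0]⟩
        intro x hx
        have hsub := face_subset hF hx
        simp at hsub
      · intro _
        refine ⟨hF, ?_⟩
        rw [hsdim0]
        simp
  · -- main case
    obtain ⟨ξc, hξv, hξW⟩ := exists_dual hv hcompl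
    have hPC : convexHull ℝ (A : Set (Fin n → ℝ)) ⊆ C :=
      convexHull_min hAC (C_convex hC)
    have hAP : (A : Set (Fin n → ℝ)) ⊆ convexHull ℝ (A : Set (Fin n → ℝ)) :=
      subset_convexHull ℝ _
    have hEfac : ∀ (i₀ : Fin m) {x : Fin n → ℝ}, x ∈ C → (x ∈ Efac i₀ ↔ ξc i₀ x = 0) :=
      fun i₀ x hx => mem_Efac_iff hC hξv hξW (hE i₀) hx
    have hpos : ∀ (i₀ : Fin m) (x : Fin n → ℝ),
        x ∈ convexHull ℝ ((A : Set (Fin n → ℝ)) \ Efac i₀) → 0 < ξc i₀ x := by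
      intro i₀ x hx
      set A' := A.filter (fun a => a ∉ Efac i₀) with hA'
      have hA'coe : (A' : Set (Fin n → ℝ)) = (A : Set (Fin n → ℝ)) \ Efac i₀ := by
        ext a; simp [hA', Set.mem_diff]
      rw [← hA'coe] at hx
      have hA'ne : A'.Nonempty := by
        have h1 : ((A' : Set (Fin n → ℝ))).Nonempty := convexHull_nonempty_iff.1 ⟨x, hx⟩
        exact Finset.coe_nonempty.1 h1
      obtain ⟨aδ, haδ, hδmin⟩ := A'.exists_min_image (fun a => ξc i₀ a) hA'ne
      have haδA : aδ ∈ A := Finset.filter_subset _ _ haδ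
      have haδC : aδ ∈ C := hAC haδA
      have hδpos : 0 < ξc i₀ aδ := by
        rcases (xi_nonneg_onC hC hξv hξW haδC i₀).lt_or_eq with h | h
        · exact h
        · exact absurd ((hEfac i₀ haδC).2 h.symm) (Finset.mem_filter.1 haδ).2
      have := conv_ge_of_ge (ξc i₀) (fun a ha => hδmin a (by exact_mod_cast ha)) x hx
      linarith
    have faceNe : ∀ {F : Set (Fin n → ℝ)},
        IsFaceOf (convexHull ℝ (A : Set (Fin n → ℝ))) F → F.Nonempty :=
      fun hF => face_nonempty hAne hF
    have hDFamP : DFam (convexHull ℝ (A : Set (Fin n → ℝ)))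
        (convexHull ℝ (A : Set (Fin n → ℝ))) = ∅ := by
      ext G
      simp only [DFam, Set.mem_setOf_eq, Set.mem_empty_iff_false, iff_false]
      intro hG
      obtain ⟨hGface, hGdisj⟩ := hG.1
      obtain ⟨g, hg⟩ := faceNe hGface
      have hmem : g ∈ G ∩ convexHull ℝ (A : Set (Fin n → ℝ)) := ⟨hg, face_subset hGface hg⟩
      rw [hGdisj] at hmem
      exact hmem
    have part1 : ∀ i : Fin n, IsDaughter A (D i) ∧
        DFam (convexHull ℝ (A : Set (Fin n → ℝ))) (D i) =
          {G | ∃ h : (i : ℕ) < m,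
            G = convexHull ℝ (A : Set (Fin n → ℝ)) ∩ Efac ⟨(i : ℕ), h⟩ ∧ G.Nonempty} := by
      intro i
      by_cases hi : (i : ℕ) < m
      · have hDi : D i = convexHull ℝ ((A : Set (Fin n → ℝ)) \ Efac ⟨(i : ℕ), hi⟩) := by
          rw [hD i, dif_pos hi]
        set i₀ : Fin m := ⟨(i : ℕ), hi⟩ with hi₀
        by_cases hAE : ∃ a ∈ A, a ∈ Efac i₀
        · obtain ⟨a₁, ha₁A, ha₁E⟩ := hAE
          have ha₁C : a₁ ∈ C := hAC ha₁A
          have hxa₁ : ξc i₀ a₁ = 0 := (hEfac i₀ ha₁C).1 ha₁E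
          have ha₁P : a₁ ∈ convexHull ℝ (A : Set (Fin n → ℝ)) := hAP ha₁A
          set Fi : Set (Fin n → ℝ) :=
            {x ∈ convexHull ℝ (A : Set (Fin n → ℝ)) | ξc i₀ x = 0} with hFi
          have ha₁Fi : a₁ ∈ Fi := ⟨ha₁P, hxa₁⟩
          have hFiface : IsFaceOf (convexHull ℝ (A : Set (Fin n → ℝ))) Fi := by
            refine ⟨-(ξc i₀), ?_⟩
            ext x
            simp only [hFi, Set.mem_setOf_eq, LinearMap.neg_apply, neg_le_neg_iff]
            constructor
            · rintro ⟨hxP, hx0⟩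
              exact ⟨hxP, fun y hy => by
                rw [hx0]; exact xi_nonneg_onC hC hξv hξW (hPC hy) i₀⟩
            · rintro ⟨hxP, hxmax⟩
              refine ⟨hxP, le_antisymm ?_ (xi_nonneg_onC hC hξv hξW (hPC hxP) i₀)⟩
              have h1 := hxmax a₁ ha₁P
              rw [hxa₁] at h1
              exact h1
          have hsubFi : ∀ G, IsFaceOf (convexHull ℝ (A : Set (Fin n → ℝ))) G →
              G ∩ D i = ∅ → G ⊆ Fi := by
            intro G hG hGD
            obtain ⟨B, hBA, hBne, rfl⟩ := face_rep hAne hG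
            have hB0 : ∀ b ∈ B, ξc i₀ b = 0 := by
              intro b hb
              by_contra hbne
              have hbA : b ∈ A := hBA hb
              have hbE : b ∉ Efac i₀ := fun hE' => hbne ((hEfac i₀ (hAC hbA)).1 hE')
              have hbD : b ∈ D i := by
                rw [hDi]
                exact subset_convexHull ℝ _ ⟨Finset.mem_coe.2 hbA, hbE⟩
              have hmem : b ∈ convexHull ℝ (B : Set (Fin n → ℝ)) ∩ D i :=
                ⟨subset_convexHull ℝ _ (Finset.mem_coe.2 hb), hbD⟩
              rw [hGD] at hmem
              exact hmem
            intro x hx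
            exact ⟨convexHull_mono (by exact_mod_cast hBA) hx,
              conv_eq_of_eq (ξc i₀) (fun a ha => hB0 a (by exact_mod_cast ha)) x hx⟩
          have hFidisj : Fi ∩ D i = ∅ := by
            ext x
            simp only [Set.mem_inter_iff, Set.mem_empty_iff_false, iff_false, not_and]
            rintro ⟨hxP, hx0⟩ hxD
            rw [hDi] at hxD
            have h2 := hpos i₀ x hxD
            rw [hx0] at h2
            exact lt_irrefl 0 h2
          have hFam : DFam (convexHull ℝ (A : Set (Fin n → ℝ))) (D i) = {Fi} := by
            ext G
            simp only [DFam, Set.mem_setOf_eq, Set.mem_singleton_iff]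
            constructor
            · intro hG
              have h1 : G ⊆ Fi := hsubFi G hG.1.1 hG.1.2
              have h2 : Fi ⊆ G := hG.2 ⟨hFiface, hFidisj⟩ h1
              exact subset_antisymm h1 h2
            · rintro rfl
              exact ⟨⟨hFiface, hFidisj⟩, fun G' hG' _ => hsubFi G' hG'.1 hG'.2⟩
          constructor
          · refine ⟨hne i, ?_, ?_⟩
            · intro F hF F' hF' hFF'
              rw [hFam, Set.mem_singleton_iff] at hF hF'
              exact absurd (hF.trans hF'.symm) hFF'
            · rw [hFam, hDi, Set.biUnion_singleton]
              congr 1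
              ext a
              simp only [Set.mem_diff, Finset.mem_coe]
              constructor
              · rintro ⟨ha, haE⟩
                exact ⟨ha, fun hFi' => haE ((hEfac i₀ (hAC ha)).2 hFi'.2)⟩
              · rintro ⟨ha, haFi⟩
                exact ⟨ha, fun hE' => haFi ⟨hAP ha, (hEfac i₀ (hAC ha)).1 hE'⟩⟩
          · rw [hFam]
            ext G
            simp only [Set.mem_singleton_iff, Set.mem_setOf_eq]
            constructor
            · rintro rfl
              refine ⟨hi, ?_, ⟨a₁, ha₁Fi⟩⟩
              ext x
              constructor
              · rintro ⟨hxP, hx0⟩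
                exact ⟨hxP, (hEfac i₀ (hPC hxP)).2 hx0⟩
              · rintro ⟨hxP, hxE⟩
                exact ⟨hxP, (hEfac i₀ (hPC hxP)).1 hxE⟩
            · rintro ⟨h', hGeq, -⟩
              rw [hGeq]
              ext x
              constructor
              · rintro ⟨hxP, hxE⟩
                exact ⟨hxP, (hEfac i₀ (hPC hxP)).1 hxE⟩
              · rintro ⟨hxP, hx0⟩
                exact ⟨hxP, (hEfac i₀ (hPC hxP)).2 hx0⟩
        · push_neg at hAE
          have hAdiff : (A : Set (Fin n → ℝ)) \ Efac i₀ = (A : Set (Fin n → ℝ)) := by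
            ext a
            simp only [Set.mem_diff, Finset.mem_coe, and_iff_left_iff_imp]
            intro ha
            exact hAE a ha
          have hDi' : D i = convexHull ℝ (A : Set (Fin n → ℝ)) := by rw [hDi, hAdiff]
          have hDF : DFam (convexHull ℝ (A : Set (Fin n → ℝ))) (D i) = ∅ := by
            rw [hDi']; exact hDFamP
          constructor
          · refine ⟨hne i, ?_, ?_⟩
            · intro F hF
              rw [hDF] at hF
              exact absurd hF (Set.notMem_empty F)
            · rw [hDF, hDi']
              simp
          · rw [hDF]
            ext G
            simp only [Set.mem_empty_iff_false, Set.mem_setOf_eq, false_iff, not_exists]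
            intro h' hand
            obtain ⟨hGeq, hGne⟩ := hand
            obtain ⟨x, hxP, hxE⟩ := hGeq ▸ hGne
            have h2 : 0 < ξc i₀ x := hpos i₀ x (by rw [hAdiff]; exact hxP)
            rw [(hEfac i₀ (hPC hxP)).1 hxE] at h2
            exact lt_irrefl 0 h2
      · have hDi' : D i = convexHull ℝ (A : Set (Fin n → ℝ)) := by rw [hD i, dif_neg hi]
        have hDF : DFam (convexHull ℝ (A : Set (Fin n → ℝ))) (D i) = ∅ := by
          rw [hDi']; exact hDFamP
        constructor
        · refine ⟨hne i, ?_, ?_⟩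
          · intro F hF
            rw [hDF] at hF
            exact absurd hF (Set.notMem_empty F)
          · rw [hDF, hDi']
            simp
        · rw [hDF]
          ext G
          simp only [Set.mem_empty_iff_false, Set.mem_setOf_eq, false_iff, not_exists]
          intro h' hand
          exact hi h'
    have sdimCF : ∀ T : Finset (Fin m), sdim (coneFace C ξc T) = T.card + (n - m) :=
      fun T => sdim_CF hC hξv hξW hmn hv hcompl T
    have main : ∀ F, IsFaceOf (convexHull ℝ (A : Set (Fin n → ℝ))) F →
        ∃ TF : Finset (Fin m),
          F ⊆ coneFace C ξc TF ∧
          (Finset.univ.filter fun i : Fin n => (D i ∩ F).Nonempty).card = TF.card + (n - m) ∧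
          (∀ T', F ⊆ coneFace C ξc T' → TF ⊆ T') := by
      intro F hF
      obtain ⟨B, hBA, hBne, hFB⟩ := face_rep hAne hF
      set TF := Finset.univ.filter (fun j : Fin m => ∃ b ∈ B, ξc j b ≠ 0) with hTFdef
      have hBF : (B : Set (Fin n → ℝ)) ⊆ F := by
        rw [hFB]; exact subset_convexHull ℝ _
      have hFP : F ⊆ convexHull ℝ (A : Set (Fin n → ℝ)) := face_subset hF
      have hFC : F ⊆ C := hFP.trans hPC
      have hmeet : ∀ (i : Fin n) (hi : (i : ℕ) < m),
          ((D i ∩ F).Nonempty ↔ (⟨(i : ℕ), hi⟩ : Fin m) ∈ TF) := by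
        intro i hi
        set i₀ : Fin m := ⟨(i : ℕ), hi⟩
        have hDi : D i = convexHull ℝ ((A : Set (Fin n → ℝ)) \ Efac i₀) := by
          rw [hD i, dif_pos hi]
        constructor
        · rintro ⟨x, hxD, hxF⟩
          rw [hDi] at hxD
          have hxpos := hpos i₀ x hxD
          rw [hTFdef, Finset.mem_filter]
          refine ⟨Finset.mem_univ _, ?_⟩
          by_contra hall
          push_neg at hall
          have h2 : ξc i₀ x = 0 := by
            rw [hFB] at hxF
            exact conv_eq_of_eq (ξc i₀) (fun a ha => hall a (by exact_mod_cast ha)) x hxF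
          rw [h2] at hxpos
          exact lt_irrefl 0 hxpos
        · intro hTFmem
          rw [hTFdef, Finset.mem_filter] at hTFmem
          obtain ⟨-, b, hbB, hbne⟩ := hTFmem
          have hbA : b ∈ A := hBA hbB
          have hbE : b ∉ Efac i₀ := fun hE' => hbne ((hEfac i₀ (hAC hbA)).1 hE')
          exact ⟨b, by rw [hDi]; exact subset_convexHull ℝ _ ⟨Finset.mem_coe.2 hbA, hbE⟩,
            hBF (Finset.mem_coe.2 hbB)⟩
      refine ⟨TF, ?_, ?_, ?_⟩
      · intro x hx
        refine ⟨hFC hx, fun j hj => ?_⟩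
        have hj' : ∀ b ∈ B, ξc j b = 0 := by
          intro b hb
          by_contra hne'
          exact hj (by rw [hTFdef]; exact Finset.mem_filter.2 ⟨Finset.mem_univ _, b, hb, hne'⟩)
        rw [hFB] at hx
        exact conv_eq_of_eq (ξc j) (fun a ha => hj' a (by exact_mod_cast ha)) x hx
      · have hcondge : ∀ i : Fin n, ¬ (i : ℕ) < m → (D i ∩ F).Nonempty := by
          intro i hi'
          have hDi' : D i = convexHull ℝ (A : Set (Fin n → ℝ)) := by rw [hD i, dif_neg hi']
          obtain ⟨b, hb⟩ := hBne
          exact ⟨b, by rw [hDi']; exact hFP (hBF (Finset.mem_coe.2 hb)),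
            hBF (Finset.mem_coe.2 hb)⟩
        have h1 : Finset.univ.filter (fun i : Fin n => (D i ∩ F).Nonempty)
            = (Finset.univ.filter (fun i : Fin n => (i : ℕ) < m ∧ (D i ∩ F).Nonempty))
              ∪ (Finset.univ.filter (fun i : Fin n => ¬ (i : ℕ) < m)) := by
          ext i
          simp only [Finset.mem_filter, Finset.mem_univ, true_and, Finset.mem_union]
          constructor
          · intro h
            by_cases hi' : (i : ℕ) < m
            · exact Or.inl ⟨hi', h⟩
            · exact Or.inr hi'
          · rintro (⟨-, h⟩ | h)
            · exact h
            · exact hcondge i h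
        have hdisj2 : Disjoint
            (Finset.univ.filter (fun i : Fin n => (i : ℕ) < m ∧ (D i ∩ F).Nonempty))
            (Finset.univ.filter (fun i : Fin n => ¬ (i : ℕ) < m)) := by
          rw [Finset.disjoint_left]
          intro i h1' h2'
          exact (Finset.mem_filter.1 h2').2 (Finset.mem_filter.1 h1').2.1
        rw [h1, Finset.card_union_of_disjoint hdisj2]
        have h2 : (Finset.univ.filter (fun i : Fin n => ¬ (i : ℕ) < m)).card = n - m := by
          have h3 := Finset.card_filter_add_card_filter_not
            (s := (Finset.univ : Finset (Fin n))) (p := fun i : Fin n => (i : ℕ) < m)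
          rw [card_lt_filter n m hmn, Finset.card_univ, Fintype.card_fin] at h3
          omega
        have h3 : (Finset.univ.filter
            (fun i : Fin n => (i : ℕ) < m ∧ (D i ∩ F).Nonempty)).card = TF.card := by
          refine Finset.card_bij
            (fun i hi => (⟨(i : ℕ), (Finset.mem_filter.1 hi).2.1⟩ : Fin m)) ?_ ?_ ?_
          · intro i hi'
            obtain ⟨-, hlt, hcond⟩ := Finset.mem_filter.1 hi'
            exact (hmeet i hlt).1 hcond
          · intro a ha b hb hab
            have hval := congrArg Fin.val hab
            exact Fin.ext hval
          · intro j hj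
            refine ⟨Fin.castLE hmn j, ?_, rfl⟩
            exact Finset.mem_filter.2 ⟨Finset.mem_univ _, j.2,
              (hmeet (Fin.castLE hmn j) j.2).2 hj⟩
        rw [h3, h2]
      · intro T' hsubT' j hjTF
        rw [hTFdef, Finset.mem_filter] at hjTF
        obtain ⟨-, b, hbB, hbne⟩ := hjTF
        by_contra hjT'
        exact hbne ((hsubT' (hBF (Finset.mem_coe.2 hbB))).2 j hjT')
    refine ⟨part1, ?_, ?_, ?_⟩
    · intro F hF Q hQmin
      obtain ⟨TF, hsub, hcard, hminT⟩ := main F hF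
      have hFne : F.Nonempty := faceNe hF
      obtain ⟨T', hQT'⟩ := face_structure hC hξv hξW hQmin.1.1 (hFne.mono hQmin.1.2)
      have hTT' : TF ⊆ T' := hminT T' (hQT' ▸ hQmin.1.2)
      have hCFsub : coneFace C ξc TF ⊆ Q := hQT' ▸ CF_mono hTT'
      have hQle : Q ⊆ coneFace C ξc TF :=
        hQmin.2 ⟨CF_isFace hC hξv hξW TF, hsub⟩ hCFsub
      have hQeq : Q = coneFace C ξc TF := subset_antisymm hQle hCFsub
      rw [hcard, hQeq, sdimCF]
    · refine ⟨fun i _ => (part1 i).1, ?_⟩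
      intro F hF
      obtain ⟨TF, hsub, hcard,-⟩ := main F hF
      rw [hcard]
      exact (Submodule.finrank_mono (vectorSpan_mono ℝ hsub)).trans_eq (sdimCF TF)
    · intro F hF
      obtain ⟨TF, hsub, hcard, hminT⟩ := main F hF
      have hsCF : sdim F ≤ TF.card + (n - m) :=
        (Submodule.finrank_mono (vectorSpan_mono ℝ hsub)).trans_eq (sdimCF TF)
      constructor
      · rintro ⟨-, heq⟩
        refine ⟨coneFace C ξc TF, CF_isFace hC hξv hξW TF, hsub, ?_⟩
        rw [sdimCF]
        omega
      · rintro ⟨Q, hQf, hFQ, hdim⟩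
        obtain ⟨T', rfl⟩ := face_structure hC hξv hξW hQf ((faceNe hF).mono hFQ)
        have hTT' : TF ⊆ T' := hminT T' hFQ
        have hcardle : TF.card ≤ T'.card := Finset.card_le_card hTT'
        refine ⟨hF, ?_⟩
        rw [hcard]
        have hd2 : sdim (coneFace C ξc T') = T'.card + (n - m) := sdimCF T'
        rw [hd2] at hdim
        omega


end
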